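/- Within any blossom B_{b,t}, for every vertex v in B_{b,t} there exists k with 1 ≤ k ≤ N(B_{b,t}) such that b = base^k(v), and all of base(v), base^2(v), ..., base^{k-1}(v) belong to B_{b,t}. -/
import Mathlib


attribute [local instance] Classical.propDecidable

variable {V : Type*} [DecidableEq V]

namespace MV

/-- A walk is alternating (w.r.t. matching `M`) in the sense used for alternating paths
starting at an unmatched vertex: the `i`-th edge is matched iff `i` is odd. -/
def IsAlt (G : SimpleGraph V) (M : G.Subgraph) {a b : V} (w : G.Walk a b) : Prop :=
  ∀ i (h : i < w.edges.length), (w.edges.get ⟨i, h⟩ ∈ M.edgeSet ↔ Odd i)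

/-- length of a minimum even alternating path from an unmatched vertex to `v`. -/
noncomputable def evenlevel (G : SimpleGraph V) (M : G.Subgraph) (v : V) : ℕ∞ :=
  sInf {n : ℕ∞ | ∃ (f : V) (w : G.Walk f v),
    f ∉ M.verts ∧ w.IsPath ∧ IsAlt G M w ∧ Even w.length ∧ n = (w.length : ℕ∞)}

/-- length of a minimum odd alternating path from an unmatched vertex to `v`. -/
noncomputable def oddlevel (G : SimpleGraph V) (M : G.Subgraph) (v : V) : ℕ∞ :=
  sInf {n : ℕ∞ | ∃ (f : V) (w : G.Walk f v),
    f ∉ M.verts ∧ w.IsPath ∧ IsAlt G M w ∧ Odd w.length ∧ n = (w.length : ℕ∞)}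

noncomputable def tenacity (G : SimpleGraph V) (M : G.Subgraph) (v : V) : ℕ∞ :=
  evenlevel G M v + oddlevel G M v

noncomputable def minlevel (G : SimpleGraph V) (M : G.Subgraph) (v : V) : ℕ∞ :=
  min (evenlevel G M v) (oddlevel G M v)

noncomputable def maxlevel (G : SimpleGraph V) (M : G.Subgraph) (v : V) : ℕ∞ :=
  max (evenlevel G M v) (oddlevel G M v)

/-- the length of a minimum length augmenting path w.r.t. `M` (`⊤` if none exists). -/
noncomputable def lm (G : SimpleGraph V) (M : G.Subgraph) : ℕ∞ :=
  sInf {n : ℕ∞ | ∃ (f g : V) (w : G.Walk f g), f ∉ M.verts ∧ g ∉ M.verts ∧ f ≠ g ∧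
    w.IsPath ∧ IsAlt G M w ∧ Odd w.length ∧ n = (w.length : ℕ∞)}

/-- `w` is a minimum even- or odd-length alternating path from an unmatched vertex to `v`
  (an `evenlevel(v)` or `oddlevel(v)` path). -/
def IsMinPathTo (G : SimpleGraph V) (M : G.Subgraph) (v f : V) (w : G.Walk f v) : Prop :=
  f ∉ M.verts ∧ w.IsPath ∧ IsAlt G M w ∧
    ((Even w.length ∧ (w.length : ℕ∞) = evenlevel G M v) ∨
     (Odd w.length ∧ (w.length : ℕ∞) = oddlevel G M v))

/-- `b` is the vertex of tenacity greater than `tenacity v` on `w` furthest from the start. -/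
def IsFurthestHigh (G : SimpleGraph V) (M : G.Subgraph) (v : V) {f v' : V}
    (w : G.Walk f v') (b : V) : Prop :=
  ∃ hb : b ∈ w.support, tenacity G M v < tenacity G M b ∧
    ∀ u, ∀ hu : u ∈ w.support, tenacity G M v < tenacity G M u →
      (w.takeUntil u hu).length ≤ (w.takeUntil b hb).length

/-- `b` is the base of `v`: the furthest higher-tenacity vertex on every minimum
even or odd alternating path to `v`. -/
def IsBase (G : SimpleGraph V) (M : G.Subgraph) (v b : V) : Prop :=
  ∀ (f : V) (w : G.Walk f v), IsMinPathTo G M v f w → IsFurthestHigh G M v w b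

/-- minimum even length alternating path from `b` to `v` starting with an unmatched edge
  (`evenlevel(b; v)`). -/
noncomputable def evenlevelFrom (G : SimpleGraph V) (M : G.Subgraph) (b v : V) : ℕ∞ :=
  sInf {n : ℕ∞ | ∃ w : G.Walk b v,
    w.IsPath ∧ IsAlt G M w ∧ Even w.length ∧ n = (w.length : ℕ∞)}

/-- minimum odd length alternating path from `b` to `v` starting with an unmatched edge
  (`oddlevel(b; v)`). -/
noncomputable def oddlevelFrom (G : SimpleGraph V) (M : G.Subgraph) (b v : V) : ℕ∞ :=
  sInf {n : ℕ∞ | ∃ w : G.Walk b v,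
    w.IsPath ∧ IsAlt G M w ∧ Odd w.length ∧ n = (w.length : ℕ∞)}

def Outer (G : SimpleGraph V) (M : G.Subgraph) (v : V) : Prop :=
  evenlevel G M v < oddlevel G M v

/-- The blossom `B_{b,t}`, defined recursively, relative to a base function `bse`. -/
noncomputable def blossom (G : SimpleGraph V) (M : G.Subgraph) (bse : V → V) :
    ℕ → V → Set V
  | 0, _ => ∅
  | 1, _ => ∅
  | (t + 2), b =>
      {v | tenacity G M v = ((t + 2 : ℕ) : ℕ∞) ∧ bse v = b} ∪
      ⋃ v ∈ {u | (u = b ∨ (tenacity G M u = ((t + 2 : ℕ) : ℕ∞) ∧ bse u = b)) ∧ Outer G M u},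
        blossom G M bse t v

/-- The nesting depth `N(B_{b,t})`. -/
noncomputable def nestDepth (G : SimpleGraph V) (M : G.Subgraph) (bse : V → V) :
    ℕ → V → ℕ
  | 0, _ => 0
  | 1, _ => 0
  | (t + 2), b =>
      if {v | tenacity G M v = ((t + 2 : ℕ) : ℕ∞) ∧ bse v = b}.Nonempty then
        1 + sSup ((fun v => nestDepth G M bse t v) ''
          {u | (u = b ∨ (tenacity G M u = ((t + 2 : ℕ) : ℕ∞) ∧ bse u = b)) ∧ Outer G M u})
      else nestDepth G M bse t b

/-- `bse` assigns to each vertex of tenacity `< l_m` its (unique) base. -/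
def BaseFn (G : SimpleGraph V) (M : G.Subgraph) (bse : V → V) : Prop :=
  ∀ v, tenacity G M v < lm G M → IsBase G M v (bse v)

/-- `u` is a predecessor of `v`: `(u,v)` is the last edge of some `minlevel(v)` path. -/
def IsPred (G : SimpleGraph V) (M : G.Subgraph) (u v : V) : Prop :=
  ∃ (f : V) (w : G.Walk f v), f ∉ M.verts ∧ w.IsPath ∧ IsAlt G M w ∧
    (w.length : ℕ∞) = minlevel G M v ∧
    0 < w.length ∧ w.getVert (w.length - 1) = u

/-- A bridge is an edge of `G` that is not a prop. -/
def IsBridge (G : SimpleGraph V) (M : G.Subgraph) (u v : V) : Prop :=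
  G.Adj u v ∧ ¬ IsPred G M u v ∧ ¬ IsPred G M v u

/-- tenacity of an edge. -/
noncomputable def edgeTenacity (G : SimpleGraph V) (M : G.Subgraph) (u v : V) : ℕ∞ :=
  if s(u, v) ∈ M.edgeSet then oddlevel G M u + oddlevel G M v + 1
  else evenlevel G M u + evenlevel G M v + 1

lemma nestDepth_le (G : SimpleGraph V) (M : G.Subgraph) (bse : V → V) :
    ∀ t b, nestDepth G M bse t b ≤ t := by
  intro t
  induction t using Nat.strong_induction_on with
  | _ t ih =>
    match t with
    | 0 => intro b; simp [nestDepth]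
    | 1 => intro b; simp [nestDepth]
    | (n + 2) =>
      intro b
      rw [nestDepth]
      split
      · have hs : sSup ((fun v => nestDepth G M bse n v) ''
            {u | (u = b ∨ (tenacity G M u = ((n + 2 : ℕ) : ℕ∞) ∧ bse u = b)) ∧
              Outer G M u}) ≤ n := by
          apply csSup_le'
          rintro x ⟨u, _, rfl⟩
          exact ih n (by omega) u
        omega
      · exact le_trans (ih n (by omega) b) (by omega)

lemma blossom_key (G : SimpleGraph V) (M : G.Subgraph) (bse : V → V) :
    ∀ t b, Outer G M b → ∀ v ∈ blossom G M bse t b,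
    ∃ k, 1 ≤ k ∧ k ≤ nestDepth G M bse t b ∧ bse^[k] v = b ∧
      ∀ j, 1 ≤ j → j < k → bse^[j] v ∈ blossom G M bse t b := by
  intro t
  induction t using Nat.strong_induction_on with
  | _ t ih =>
    match t with
    | 0 => intro b _ v hv; simp [blossom] at hv
    | 1 => intro b _ v hv; simp [blossom] at hv
    | (n + 2) =>
      intro b hb v hv
      have hbdd : BddAbove ((fun v => nestDepth G M bse n v) ''
          {u | (u = b ∨ (tenacity G M u = ((n + 2 : ℕ) : ℕ∞) ∧ bse u = b)) ∧
            Outer G M u}) := by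
        refine ⟨n, ?_⟩
        rintro x ⟨u, _, rfl⟩
        exact nestDepth_le G M bse n u
      rw [blossom] at hv
      rcases hv with hv | hv
      · -- v ∈ S_{b, n+2}
        refine ⟨1, le_refl 1, ?_, ?_, ?_⟩
        · rw [nestDepth]
          rw [if_pos ⟨v, hv⟩]
          omega
        · simpa using hv.2
        · intro j hj1 hj2; omega
      · rw [Set.mem_iUnion₂] at hv
        obtain ⟨u, hu, hvu⟩ := hv
        obtain ⟨k', hk1, hk2, hkeq, hkmem⟩ := ih n (by omega) u hu.2 v hvu
        have hsub : ∀ x ∈ blossom G M bse n u, x ∈ blossom G M bse (n + 2) b := by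
          intro x hx
          rw [blossom]
          right
          rw [Set.mem_iUnion₂]
          exact ⟨u, hu, hx⟩
        rcases hu.1 with rfl | ⟨hten, hbu⟩
        · -- u = b
          refine ⟨k', hk1, ?_, hkeq, ?_⟩
          · rw [nestDepth]
            split
            · have : nestDepth G M bse n u ≤ sSup ((fun v => nestDepth G M bse n v) ''
                  {x | (x = u ∨ (tenacity G M x = ((n + 2 : ℕ) : ℕ∞) ∧ bse x = u)) ∧
                    Outer G M x}) :=
                le_csSup hbdd ⟨u, ⟨Or.inl rfl, hu.2⟩, rfl⟩
              omega
            · omega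
          · intro j hj1 hj2
            exact hsub _ (hkmem j hj1 hj2)
        · -- u ∈ S_{b, n+2}
          refine ⟨k' + 1, by omega, ?_, ?_, ?_⟩
          · rw [nestDepth, if_pos ⟨u, hten, hbu⟩]
            have : nestDepth G M bse n u ≤ sSup ((fun v => nestDepth G M bse n v) ''
                {x | (x = b ∨ (tenacity G M x = ((n + 2 : ℕ) : ℕ∞) ∧ bse x = b)) ∧
                  Outer G M x}) :=
              le_csSup hbdd ⟨u, ⟨Or.inr ⟨hten, hbu⟩, hu.2⟩, rfl⟩
            omega
          · rw [Function.iterate_succ_apply', hkeq, hbu]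
          · intro j hj1 hj2
            rcases lt_or_eq_of_le (by omega : j ≤ k') with hj | rfl
            · exact hsub _ (hkmem j hj1 hj)
            · rw [hkeq]
              rw [blossom]
              exact Or.inl ⟨hten, hbu⟩

/-- For every `v ∈ B_{b,t}` there is `k` with `1 ≤ k ≤ N(B_{b,t})` such that
`b = base^k(v)`, and `base(v), …, base^{k-1}(v)` all belong to `B_{b,t}`. -/
theorem stmt7 (G : SimpleGraph V) (M : G.Subgraph) (hM : M.IsMatching)
    (bse : V → V) (hbse : BaseFn G M bse)
    (b : V) (t : ℕ) (hodd : Odd t) (hb : Outer G M b)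
    (htb : (t : ℕ∞) < tenacity G M b) (hlm : (t : ℕ∞) < lm G M)
    (v : V) (hv : v ∈ blossom G M bse t b) :
    ∃ k, 1 ≤ k ∧ k ≤ nestDepth G M bse t b ∧ bse^[k] v = b ∧
      ∀ j, 1 ≤ j → j < k → bse^[j] v ∈ blossom G M bse t b := by
  exact blossom_key G M bse t b hb v hv

end MV
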